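/- Key identity (*) in the proof of Theorem 1: Let Φ be a field, V and W vector spaces over Φ, and let A ⊆ L(V) ⊆ L(V ⊕ W) and B ⊆ M = U(L(V))·W ⊆ L(V ⊕ W) be subspaces. Set M₁ = [M, ⟨A⟩_{L(V)}] + U(L(V))·B. Then, identifying the ideal of L(V ⊕ W) generated by W with the free Lie algebra L(M) via Lazard's elimination theorem, the ideal of L(V ⊕ W) generated by A ∪ B satisfies ⟨A, B⟩_{L(V ⊕ W)} = ⟨A⟩_{L(V)} + ⟨M₁⟩_{L(M)} (a sum of subspaces of L(V ⊕ W) = L(V) ⊕ L(M)). -/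

import Mathlib

variable (Φ : Type*) [Field Φ]

/-- The Lie ideal of linearity relations inside the free Lie algebra on the type
underlying a module, used to define the free Lie algebra on a module. -/
noncomputable def freeLieModuleRel (M : Type*) [AddCommGroup M] [Module Φ M] :
    LieIdeal Φ (FreeLieAlgebra Φ M) :=
  LieSubmodule.lieSpan Φ _
    ({x | ∃ a b : M, x = FreeLieAlgebra.of Φ (a + b) - FreeLieAlgebra.of Φ a -
        FreeLieAlgebra.of Φ b} ∪
     {x | ∃ (c : Φ) (a : M), x = FreeLieAlgebra.of Φ (c • a) - c • FreeLieAlgebra.of Φ a})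

/-- The free Lie algebra on a module `M`: the quotient of the free Lie algebra on the
type `M` by the linearity relations. -/
abbrev FreeLieModule (M : Type*) [AddCommGroup M] [Module Φ M] :=
  FreeLieAlgebra Φ M ⧸ freeLieModuleRel Φ M

/-- The canonical linear embedding of a module into the free Lie algebra on it. -/
noncomputable def FreeLieModule.ι (M : Type*) [AddCommGroup M] [Module Φ M] :
    M →ₗ[Φ] FreeLieModule Φ M where
  toFun a := (freeLieModuleRel Φ M).toSubmodule.mkQ (FreeLieAlgebra.of Φ a)
  map_add' a b := by
    show (freeLieModuleRel Φ M).toSubmodule.mkQ (FreeLieAlgebra.of Φ (a + b)) =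
      (freeLieModuleRel Φ M).toSubmodule.mkQ (FreeLieAlgebra.of Φ a) +
        (freeLieModuleRel Φ M).toSubmodule.mkQ (FreeLieAlgebra.of Φ b)
    rw [← sub_eq_zero, ← map_add, ← map_sub, Submodule.mkQ_apply,
      Submodule.Quotient.mk_eq_zero]
    exact LieSubmodule.subset_lieSpan (Or.inl ⟨a, b, (sub_sub _ _ _).symm⟩)
  map_smul' c a := by
    show (freeLieModuleRel Φ M).toSubmodule.mkQ (FreeLieAlgebra.of Φ (c • a)) =
      c • (freeLieModuleRel Φ M).toSubmodule.mkQ (FreeLieAlgebra.of Φ a)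
    rw [← sub_eq_zero, ← map_smul, ← map_sub, Submodule.mkQ_apply,
      Submodule.Quotient.mk_eq_zero]
    exact LieSubmodule.subset_lieSpan (Or.inr ⟨c, a, rfl⟩)

/-- The smallest subspace of a Lie algebra containing `s` and stable under the adjoint
action of every element of `K`; when `K` is (the underlying set of) a Lie subalgebra `𝔨`
this is the `U(𝔨)`-submodule generated by `s`. -/
def adSpan {L : Type*} [LieRing L] [LieAlgebra Φ L] (K s : Set L) : Submodule Φ L :=
  sInf {P | s ⊆ P ∧ ∀ x ∈ K, ∀ p ∈ P, ⁅x, p⁆ ∈ P}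

/-- The span of brackets `⁅p, q⁆` with `p ∈ P` and `q ∈ Q`. -/
def bracketSpan {L : Type*} [LieRing L] [LieAlgebra Φ L] (P Q : Submodule Φ L) :
    Submodule Φ L :=
  Submodule.span Φ {x | ∃ p ∈ P, ∃ q ∈ Q, x = ⁅p, q⁆}

/-- The quotient map onto the quotient of a Lie algebra by an ideal, as a Lie algebra
homomorphism. -/
def lieQuotientMk {L : Type*} [LieRing L] [LieAlgebra Φ L] (I : LieIdeal Φ L) :
    L →ₗ⁅Φ⁆ L ⧸ I :=
  { I.toSubmodule.mkQ with map_lie' := fun {_ _} => rfl }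


section Aux
variable {L : Type*} [LieRing L] [LieAlgebra Φ L]

theorem subset_adSpan'' (K s : Set L) : s ⊆ ↑(adSpan Φ K s) := by
  intro x hx
  rw [SetLike.mem_coe, adSpan, Submodule.mem_sInf]
  exact fun P hP => hP.1 hx

theorem adSpan_le'' {K s : Set L} {P : Submodule Φ L} (h1 : s ⊆ ↑P)
    (h2 : ∀ x ∈ K, ∀ p ∈ P, ⁅x, p⁆ ∈ P) : adSpan Φ K s ≤ P :=
  sInf_le ⟨h1, h2⟩

theorem lie_mem_adSpan'' {K s : Set L} {x p : L} (hx : x ∈ K) (hp : p ∈ adSpan Φ K s) :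
    ⁅x, p⁆ ∈ adSpan Φ K s := by
  rw [adSpan, Submodule.mem_sInf] at hp ⊢
  exact fun P hP => hP.2 x hx p (hp P hP)

def stab (Q : Submodule Φ L) : LieSubalgebra Φ L where
  carrier := {x | ∀ q ∈ Q, ⁅x, q⁆ ∈ Q}
  add_mem' hx hy q hq := by rw [add_lie]; exact Q.add_mem (hx q hq) (hy q hq)
  zero_mem' q hq := by rw [zero_lie]; exact Q.zero_mem
  smul_mem' c x hx q hq := by rw [smul_lie]; exact Q.smul_mem c (hx q hq)
  lie_mem' {x y} hx hy q hq := by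
    rw [lie_lie]; exact Q.sub_mem (hx _ (hy q hq)) (hy _ (hx q hq))

def dstab (x : L) (S : LieSubalgebra Φ L) : LieSubalgebra Φ L where
  carrier := {s | s ∈ S ∧ ⁅x, s⁆ ∈ S}
  add_mem' hs ht := ⟨S.add_mem hs.1 ht.1, by rw [lie_add]; exact S.add_mem hs.2 ht.2⟩
  zero_mem' := ⟨S.zero_mem, by rw [lie_zero]; exact S.zero_mem⟩
  smul_mem' c s hs := ⟨S.smul_mem c hs.1, by rw [lie_smul]; exact S.smul_mem c hs.2⟩
  lie_mem' {s t} hs ht := ⟨S.lie_mem hs.1 ht.1, by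
    rw [leibniz_lie]; exact S.add_mem (S.lie_mem hs.2 ht.1) (S.lie_mem hs.1 ht.2)⟩

theorem freeLie_forall_mem {X : Type*} (S : LieSubalgebra Φ (FreeLieAlgebra Φ X))
    (h : ∀ x, FreeLieAlgebra.of Φ x ∈ S) (y : FreeLieAlgebra Φ X) : y ∈ S := by
  let F : FreeLieAlgebra Φ X →ₗ⁅Φ⁆ S :=
    FreeLieAlgebra.lift Φ (fun x => (⟨FreeLieAlgebra.of Φ x, h x⟩ : S))
  have key : S.incl.comp F = LieHom.id := by
    apply FreeLieAlgebra.hom_ext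
    intro x
    simp [F, FreeLieAlgebra.lift_of_apply]
  have h2 : S.incl (F y) = y := by
    rw [← LieHom.comp_apply, key]; rfl
  rw [← h2]
  exact (F y).2

theorem freeLieModule_forall_mem {M : Type*} [AddCommGroup M] [Module Φ M]
    (S : LieSubalgebra Φ (FreeLieModule Φ M))
    (h : ∀ a, FreeLieModule.ι Φ M a ∈ S) (y : FreeLieModule Φ M) : y ∈ S := by
  obtain ⟨z, rfl⟩ := (freeLieModuleRel Φ M).toSubmodule.mkQ_surjective y
  have hz : z ∈ S.comap (lieQuotientMk Φ (freeLieModuleRel Φ M)) :=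
    freeLie_forall_mem Φ _ (fun x => h x) z
  exact hz

end Aux

variable (V W : Type*) [AddCommGroup V] [Module Φ V] [AddCommGroup W] [Module Φ W]

/-- The canonical embedding of `V` into the free Lie algebra on `V ⊕ W`. -/
noncomputable def ιV : V →ₗ[Φ] FreeLieModule Φ (V × W) :=
  (FreeLieModule.ι Φ (V × W)).comp (LinearMap.inl Φ V W)

/-- The canonical embedding of `W` into the free Lie algebra on `V ⊕ W`. -/
noncomputable def ιW : W →ₗ[Φ] FreeLieModule Φ (V × W) :=
  (FreeLieModule.ι Φ (V × W)).comp (LinearMap.inr Φ V W)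

/-- The Lie subalgebra of `L(V ⊕ W)` generated by `V`; it is a copy of `L(V)`. -/
noncomputable def lieV : LieSubalgebra Φ (FreeLieModule Φ (V × W)) :=
  LieSubalgebra.lieSpan Φ _ (Set.range (ιV Φ V W))

/-- The subspace `M = U(L(V)) · W` of `L(V ⊕ W)`: the smallest subspace containing `W`
and stable under the adjoint action of the subalgebra `L(V)`. -/
noncomputable def lazardM : Submodule Φ (FreeLieModule Φ (V × W)) :=
  adSpan Φ ↑(lieV Φ V W) (Set.range (ιW Φ V W))

/-- The Lie ideal of `L(V ⊕ W)` generated by `W`. -/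
noncomputable def idealW : LieIdeal Φ (FreeLieModule Φ (V × W)) :=
  LieSubmodule.lieSpan Φ _ (Set.range (ιW Φ V W))

variable (A B : Submodule Φ (FreeLieModule Φ (V × W)))

/-- The ideal `⟨A⟩_{L(V)}` of the subalgebra `L(V) ⊆ L(V ⊕ W)` generated by a subspace
`A ⊆ L(V)`, realised as a subspace of `L(V ⊕ W)`: the smallest subspace containing `A`
and stable under bracketing with elements of `L(V)`. -/
noncomputable def idealA : Submodule Φ (FreeLieModule Φ (V × W)) :=
  adSpan Φ ↑(lieV Φ V W) ↑A

/-- The subspace `M₁ = [M, ⟨A⟩_{L(V)}] + U(L(V)) · B` of `L(V ⊕ W)`. -/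
noncomputable def lazardM1 : Submodule Φ (FreeLieModule Φ (V × W)) :=
  bracketSpan Φ (lazardM Φ V W) (idealA Φ V W A) ⊔ adSpan Φ ↑(lieV Φ V W) ↑B

/-- The quotient space `N = M / M₁`. -/
abbrev lazardN :=
  ↥(lazardM Φ V W) ⧸ (lazardM1 Φ V W A B).comap (lazardM Φ V W).subtype

/-- The Lie ideal `⟨A, B⟩` of `L(V ⊕ W)` generated by `A ∪ B`. -/
noncomputable def idealAB : LieIdeal Φ (FreeLieModule Φ (V × W)) :=
  LieSubmodule.lieSpan Φ _ (↑A ∪ ↑B)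

/-- **Key identity (*) in the proof of Theorem 1.** Identifying the ideal of `L(V ⊕ W)`
generated by `W` with `L(M)` via Lazard's elimination theorem, the ideal of `L(V ⊕ W)`
generated by `A ∪ B` decomposes as
`⟨A, B⟩_{L(V ⊕ W)} = ⟨A⟩_{L(V)} + ⟨M₁⟩_{L(M)}`, a sum of subspaces of
`L(V ⊕ W) = L(V) ⊕ L(M)`; here `⟨M₁⟩_{L(M)}` is the ideal of `L(M)` generated by `M₁`,
i.e. the smallest subspace containing `M₁` and stable under bracketing with the ideal
generated by `W`. -/
theorem idealAB_eq_idealA_sup_idealM1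
    (hA : A ≤ (lieV Φ V W).toSubmodule) (hB : B ≤ lazardM Φ V W) :
    (idealAB Φ V W A B).toSubmodule =
      idealA Φ V W A ⊔ adSpan Φ ↑(idealW Φ V W) ↑(lazardM1 Φ V W A B) := by
  set Q : Submodule Φ (FreeLieModule Φ (V × W)) := adSpan Φ ↑(idealW Φ V W) ↑(lazardM1 Φ V W A B) with hQdef
  have hVmem : ∀ v, ιV Φ V W v ∈ lieV Φ V W := fun v =>
    LieSubalgebra.subset_lieSpan ⟨v, rfl⟩
  have hWM : ∀ w, ιW Φ V W w ∈ lazardM Φ V W := fun w =>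
    subset_adSpan'' Φ _ _ ⟨w, rfl⟩
  have hMW : lazardM Φ V W ≤ (idealW Φ V W).toSubmodule :=
    adSpan_le'' Φ (fun x hx => LieSubmodule.subset_lieSpan hx)
      (fun x _ p hp => (idealW Φ V W).lie_mem hp)
  have hM1Q : lazardM1 Φ V W A B ≤ Q := fun x hx => subset_adSpan'' Φ _ _ hx
  have hAiA : A ≤ idealA Φ V W A := fun x hx => subset_adSpan'' Φ _ _ hx
  have hbrM1 : ∀ m ∈ lazardM Φ V W, ∀ p ∈ idealA Φ V W A,
      ⁅m, p⁆ ∈ lazardM1 Φ V W A B := by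
    intro m hm p hp
    rw [lazardM1]
    apply Submodule.mem_sup_left
    rw [bracketSpan]
    exact Submodule.subset_span ⟨m, hm, p, hp, rfl⟩
  have hBM1 : B ≤ lazardM1 Φ V W A B := by
    intro b hb
    rw [lazardM1]
    exact Submodule.mem_sup_right (subset_adSpan'' Φ _ _ hb)
  have hι : ∀ p : V × W, FreeLieModule.ι Φ (V × W) p = ιV Φ V W p.1 + ιW Φ V W p.2 := by
    intro p
    rw [ιV, ιW]
    simp only [LinearMap.comp_apply, LinearMap.inl_apply, LinearMap.inr_apply]
    rw [← map_add]
    congr 1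
    ext <;> simp
  -- [lieV, M₁] ⊆ M₁
  have hVM1 : ∀ x ∈ lieV Φ V W, ∀ m ∈ lazardM1 Φ V W A B,
      ⁅x, m⁆ ∈ lazardM1 Φ V W A B := by
    intro x hx
    have hcomap : lazardM1 Φ V W A B ≤
        (lazardM1 Φ V W A B).comap (LieAlgebra.ad Φ _ x) := by
      conv_lhs => rw [lazardM1]
      apply sup_le
      · rw [bracketSpan, Submodule.span_le]
        rintro _ ⟨p, hp, q, hq, rfl⟩
        simp only [SetLike.mem_coe, Submodule.mem_comap, LieAlgebra.ad_apply]
        rw [leibniz_lie]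
        refine Submodule.add_mem _ ?_ ?_
        · exact hbrM1 _ (lie_mem_adSpan'' Φ hx hp) _ hq
        · exact hbrM1 _ hp _ (lie_mem_adSpan'' Φ hx hq)
      · intro b hb
        simp only [Submodule.mem_comap, LieAlgebra.ad_apply]
        rw [lazardM1]
        exact Submodule.mem_sup_right (lie_mem_adSpan'' Φ hx hb)
    intro m hm
    have := hcomap hm
    rwa [Submodule.mem_comap, LieAlgebra.ad_apply] at this
  -- [lieV, Q] ⊆ Q
  have hVQ : ∀ x ∈ lieV Φ V W, ∀ q ∈ Q, ⁅x, q⁆ ∈ Q := by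
    have key : Q ≤ Q ⊓ ⨅ x : (lieV Φ V W),
        Q.comap (LieAlgebra.ad Φ _ (x : FreeLieModule Φ (V × W))) := by
      rw [hQdef]
      apply adSpan_le''
      · intro m hm
        rw [SetLike.mem_coe, Submodule.mem_inf, Submodule.mem_iInf]
        rw [SetLike.mem_coe] at hm
        refine ⟨hM1Q hm, fun x => ?_⟩
        rw [Submodule.mem_comap, LieAlgebra.ad_apply]
        exact hM1Q (hVM1 x x.2 m hm)
      · intro w hw p hp
        rw [Submodule.mem_inf, Submodule.mem_iInf] at hp
        obtain ⟨hp1, hp2⟩ := hp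
        rw [Submodule.mem_inf, Submodule.mem_iInf]
        refine ⟨lie_mem_adSpan'' Φ hw hp1, fun x => ?_⟩
        rw [Submodule.mem_comap, LieAlgebra.ad_apply, leibniz_lie]
        refine Q.add_mem ?_ ?_
        · exact lie_mem_adSpan'' Φ (SetLike.mem_coe.mpr ((idealW Φ V W).lie_mem hw)) hp1
        · have := hp2 x
          rw [Submodule.mem_comap, LieAlgebra.ad_apply] at this
          exact lie_mem_adSpan'' Φ hw this
    intro x hx q hq
    have h' := (Submodule.mem_inf.mp (key hq)).2
    rw [Submodule.mem_iInf] at h'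
    have h2 := h' ⟨x, hx⟩
    rwa [Submodule.mem_comap, LieAlgebra.ad_apply] at h2
  -- [L, Q] ⊆ Q via generation
  have hLQ : ∀ y, y ∈ stab Φ Q := by
    refine fun y => freeLieModule_forall_mem Φ _ (fun a => ?_) y
    rw [hι]
    refine (stab Φ Q).add_mem ?_ ?_
    · intro q hq; exact hVQ _ (hVmem a.1) q hq
    · intro q hq; exact lie_mem_adSpan'' Φ (hMW (hWM a.2)) hq
  -- idealW is contained in the Lie subalgebra generated by M
  set SpanM := LieSubalgebra.lieSpan Φ (FreeLieModule Φ (V × W)) ↑(lazardM Φ V W)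
    with hSpanM
  have hVSpan : ∀ x ∈ lieV Φ V W, ∀ s ∈ SpanM, ⁅x, s⁆ ∈ SpanM := by
    intro x hx
    have hd : SpanM ≤ dstab Φ x SpanM := by
      rw [hSpanM]
      apply LieSubalgebra.lieSpan_le.mpr
      intro m hm
      exact ⟨LieSubalgebra.subset_lieSpan hm,
        LieSubalgebra.subset_lieSpan (lie_mem_adSpan'' Φ hx hm)⟩
    exact fun s hs => (hd hs).2
  have hstabSpan : ∀ y, y ∈ stab Φ SpanM.toSubmodule := by
    refine fun y => freeLieModule_forall_mem Φ _ (fun a => ?_) y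
    rw [hι]
    refine (stab Φ SpanM.toSubmodule).add_mem ?_ ?_
    · intro s hs; exact hVSpan _ (hVmem a.1) s hs
    · intro s hs; exact SpanM.lie_mem (LieSubalgebra.subset_lieSpan (hWM a.2)) hs
  have hWSpan : (idealW Φ V W).toSubmodule ≤ SpanM.toSubmodule := by
    have hle : idealW Φ V W ≤ ({ SpanM.toSubmodule with
        lie_mem := fun {x m} hm => hstabSpan x m hm } : LieIdeal Φ _) := by
      apply LieSubmodule.lieSpan_le.mpr
      rintro _ ⟨w, rfl⟩
      exact LieSubalgebra.subset_lieSpan (hWM w)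
    exact fun x hx => hle hx
  -- [idealW, idealA] ⊆ Q
  have hWiA : ∀ x ∈ idealW Φ V W, ∀ p ∈ idealA Φ V W A, ⁅x, p⁆ ∈ Q := by
    let E : LieSubalgebra Φ (FreeLieModule Φ (V × W)) :=
      { carrier := {x | x ∈ idealW Φ V W ∧ ∀ p ∈ idealA Φ V W A, ⁅x, p⁆ ∈ Q}
        add_mem' := fun hx hy => ⟨(idealW Φ V W).add_mem hx.1 hy.1, fun p hp => by
          rw [add_lie]; exact Q.add_mem (hx.2 p hp) (hy.2 p hp)⟩
        zero_mem' := ⟨(idealW Φ V W).zero_mem, fun p hp => by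
          rw [zero_lie]; exact Q.zero_mem⟩
        smul_mem' := fun c x hx => ⟨(idealW Φ V W).smul_mem c hx.1, fun p hp => by
          rw [smul_lie]; exact Q.smul_mem c (hx.2 p hp)⟩
        lie_mem' := fun {x y} hx hy => ⟨(idealW Φ V W).lie_mem hy.1, fun p hp => by
          rw [lie_lie]
          exact Q.sub_mem (lie_mem_adSpan'' Φ hx.1 (hy.2 p hp))
            (lie_mem_adSpan'' Φ hy.1 (hx.2 p hp))⟩ }
    have hE : SpanM ≤ E := by
      rw [hSpanM]
      apply LieSubalgebra.lieSpan_le.mpr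
      intro m hm
      exact ⟨hMW hm, fun p hp => hM1Q (hbrM1 m hm p hp)⟩
    intro x hx p hp
    exact (hE (hWSpan hx)).2 p hp
  -- R = idealA ⊔ Q is stable under all brackets
  have hstabR : ∀ y, y ∈ stab Φ (idealA Φ V W A ⊔ Q) := by
    refine fun y => freeLieModule_forall_mem Φ _ (fun a => ?_) y
    rw [hι]
    refine (stab Φ _).add_mem ?_ ?_
    · intro r hr
      obtain ⟨p, hp, q, hq, rfl⟩ := Submodule.mem_sup.mp hr
      rw [lie_add]
      exact Submodule.add_mem _
        (Submodule.mem_sup_left (lie_mem_adSpan'' Φ (hVmem a.1) hp))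
        (Submodule.mem_sup_right (hVQ _ (hVmem a.1) q hq))
    · intro r hr
      obtain ⟨p, hp, q, hq, rfl⟩ := Submodule.mem_sup.mp hr
      rw [lie_add]
      have hwW : ιW Φ V W a.2 ∈ idealW Φ V W := hMW (hWM a.2)
      exact Submodule.add_mem _
        (Submodule.mem_sup_right (hWiA _ hwW p hp))
        (Submodule.mem_sup_right (lie_mem_adSpan'' Φ hwW hq))
  apply le_antisymm
  · have hle : idealAB Φ V W A B ≤ ({ (idealA Φ V W A ⊔ Q : Submodule Φ _) with
        lie_mem := fun {x m} hm => hstabR x m hm } : LieIdeal Φ _) := by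
      apply LieSubmodule.lieSpan_le.mpr
      apply Set.union_subset
      · intro a ha
        exact Submodule.mem_sup_left (hAiA ha)
      · intro b hb
        exact Submodule.mem_sup_right (hM1Q (hBM1 hb))
    exact fun x hx => hle hx
  · have hIA : idealA Φ V W A ≤ (idealAB Φ V W A B).toSubmodule := by
      apply adSpan_le''
      · intro a ha
        exact LieSubmodule.subset_lieSpan (Or.inl ha)
      · intro x _ p hp
        exact (idealAB Φ V W A B).lie_mem hp
    refine sup_le hIA ?_
    rw [hQdef]
    have hM1I : lazardM1 Φ V W A B ≤ (idealAB Φ V W A B).toSubmodule := by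
      rw [lazardM1]
      refine sup_le ?_ ?_
      · rw [bracketSpan]
        apply Submodule.span_le.mpr
        rintro _ ⟨m', hm', a, ha, rfl⟩
        exact (idealAB Φ V W A B).lie_mem (hIA ha)
      · apply adSpan_le''
        · intro b hb
          exact LieSubmodule.subset_lieSpan (Or.inr hb)
        · intro x _ p hp
          exact (idealAB Φ V W A B).lie_mem hp
    apply adSpan_le''
    · exact fun m hm => hM1I hm
    · intro x _ p hp
      exact (idealAB Φ V W A B).lie_mem hp
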